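/- arXiv:2109.11693 — 4 statements merged into one kernel-verified Lean document; each statement's English description precedes it below -/
import Mathlib

section
/- A single Scalable TCP flow (which multiplies its window by 7/8 on loss) achieves full link utilization if B ≥ (1/7)·BDP, and achieves at least 87.5% utilization with zero buffer. -/
/-- Scalable TCP (decrease factor 7/8): full utilization if
`B ≥ (1/7) BDP`, and ≥ 87.5% utilization with zero buffer. -/
theorem scalable_buffer_rule
    (BDP B : ℝ) (hBDP : 0 < BDP) (hB : 0 ≤ B) :
    (B ≥ (1 / 7) * BDP →
      ∀ Wt : ℝ, Wt ≥ BDP + B → min ((7 / 8) * Wt / BDP) 1 = 1) ∧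
    (B = 0 →
      ∀ Wt : ℝ, Wt ≥ BDP + B → min ((7 / 8) * Wt / BDP) 1 ≥ 7 / 8) := by
  constructor
  · intro h1 Wt hWt
    have : (7 / 8) * Wt / BDP ≥ 1 := by
      rw [ge_iff_le, le_div_iff₀ hBDP]
      nlinarith
    simp [min_eq_right this]
  · intro h0 Wt hWt
    have : (7 / 8) * Wt / BDP ≥ 7 / 8 := by
      rw [ge_iff_le, le_div_iff₀ hBDP]
      nlinarith
    have h78 : (7:ℝ)/8 ≤ 1 := by norm_num
    exact le_min this h78
end

section
/- Consider n Δ-fair TCP Reno flows (so every window satisfies w_i(t) ≤ Δ⁺·BDP/n) with each w_i(t) ≥ 2, sharing a link where loss happens only when the aggregate window W ≥ BDP + B. If between a loss at time t₁ and time t, the set D of flows that halve their windows satisfies |D| ≤ n²/(Δ⁺·BDP) + √n, while every flow not in D increases its window by 1, then the aggregate window at time t satisfies W(t) ≥ BDP + B − Δ⁺·BDP/√n. -/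
/-- generalized square-root-of-n window bound for Δ-fair TCP Reno
flows. Flows in `D` halve their windows, other flows gain 1 packet. -/
theorem sqrt_n_window_bound
    (n : ℕ) (hn : 1 ≤ n) (BDP B Δp : ℝ) (hBDP : 0 < BDP) (hB : 0 ≤ B)
    (hΔp : 1 ≤ Δp)
    (w : Fin n → ℝ) (D : Finset (Fin n))
    (hfair : ∀ i, w i ≤ Δp * BDP / n)
    (hlow : ∀ i, 2 ≤ w i)
    (hagg : ∑ i, w i ≥ BDP + B)
    (hD : (D.card : ℝ) ≤ n ^ 2 / (Δp * BDP) + Real.sqrt n) :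
    ∑ i, (if i ∈ D then w i / 2 else w i + 1) ≥
      BDP + B - Δp * BDP / Real.sqrt n := by
  have hn0 : (0:ℝ) < n := by exact_mod_cast hn
  set s := Real.sqrt n with hsdef
  have hs0 : 0 < s := Real.sqrt_pos.2 hn0
  have hs2 : s * s = n := Real.mul_self_sqrt (le_of_lt hn0)
  have hP : 0 < Δp * BDP := by positivity
  -- split the sum
  have hsplit : ∑ i, (if i ∈ D then w i / 2 else w i + 1)
      = (∑ i ∈ D, w i / 2) + ((∑ i ∈ Dᶜ, w i) + (n - D.card)) := by
    rw [Finset.sum_ite]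
    congr 1
    · congr 1
      ext i; simp
    · have : Finset.univ.filter (fun i => ¬ i ∈ D) = Dᶜ := by
        ext i; simp
      rw [this, Finset.sum_add_distrib, Finset.sum_const]
      have hc : (Dᶜ.card : ℝ) = n - D.card := by
        rw [Finset.card_compl]
        have hle : D.card ≤ Fintype.card (Fin n) := Finset.card_le_univ D
        push_cast [Nat.cast_sub hle]
        simp
      simp [hc]
  rw [hsplit]
  have hcompl : (∑ i ∈ Dᶜ, w i) = (∑ i, w i) - ∑ i ∈ D, w i := by
    have := Finset.sum_compl_add_sum D w
    linarith
  have hA : (D.card : ℝ) * 1 ≤ ∑ i ∈ D, w i / 2 := by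
    have := Finset.card_nsmul_le_sum D (fun i => w i / 2) 1
      (fun i _ => by linarith [hlow i])
    simpa [nsmul_eq_mul] using this
  have hBd : ∑ i ∈ D, w i ≤ (D.card : ℝ) * (Δp * BDP / n) := by
    have := Finset.sum_le_card_nsmul D w (Δp * BDP / n) (fun i _ => hfair i)
    simpa [nsmul_eq_mul] using this
  have hkey : (D.card : ℝ) * (Δp * BDP / n) ≤ n + Δp * BDP / s := by
    have h1 : (D.card : ℝ) * (Δp * BDP) ≤ (n:ℝ) * n + Δp * BDP * s := by
      have h0 := mul_le_mul_of_nonneg_right hD hP.le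
      have he : ((n:ℝ) ^ 2 / (Δp * BDP) + s) * (Δp * BDP)
          = (n:ℝ) * n + Δp * BDP * s := by
        field_simp
      linarith [he ▸ h0]
    have hPs : Δp * BDP / s = Δp * BDP * s / n := by
      rw [← hs2]; field_simp
    rw [hPs]
    calc (D.card : ℝ) * (Δp * BDP / n) = (D.card : ℝ) * (Δp * BDP) / n := by
          ring
      _ ≤ ((n:ℝ) * n + Δp * BDP * s) / n := by gcongr
      _ = n + Δp * BDP * s / n := by field_simp
  rw [hcompl]
  linarith [hagg]
end

section
/- Consider n Δ-fair BBR flows in the probe-bandwidth phase, where on a loss at time t₁ each flow i independently changes its in-flight packets by X_i, with X_i = −(1/4)w_i(t₁) with probability 1/8, X_i = +(1/4)w_i(t₁) with probability 1/8, and X_i = 0 with probability 3/4, where w_i(t₁) = R_i(t₁)·RTT ≤ Δ⁺·BDP/n. If B > (Δ⁺·BDP/√(2n))·√(ln(1/δ)) for some δ ∈ (0,1), then with probability at least 1 − δ the aggregate window stays above BDP and the link remains fully utilized. -/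
open MeasureTheory ProbabilityTheory Real

/-- Hoeffding mgf bound for a bounded mean-zero variable. -/
lemma mgf_le_of_bound {Ω : Type*} [MeasurableSpace Ω] (P : Measure Ω)
    [IsProbabilityMeasure P] {X : Ω → ℝ} (hX : Measurable X) {c : ℝ} (hc : 0 < c)
    (hb : ∀ ω, |X ω| ≤ c) (hmean : ∫ ω, X ω ∂P = 0) (t : ℝ) :
    mgf X P t ≤ exp (t ^ 2 * c ^ 2 / 2) := by
  have hXint : Integrable X P :=
    (integrable_const c).mono' hX.aestronglyMeasurable
      (Filter.Eventually.of_forall fun ω => by simpa using hb ω)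
  have key : ∀ ω, exp (t * X ω) ≤ cosh (t * c) + (sinh (t * c) / c) * X ω := by
    intro ω
    have h1 : -c ≤ X ω := (abs_le.1 (hb ω)).1
    have h2 : X ω ≤ c := (abs_le.1 (hb ω)).2
    have ha : 0 ≤ (c - X ω) / (2 * c) := by
      apply div_nonneg _ (by positivity); linarith
    have hb' : 0 ≤ (c + X ω) / (2 * c) := by
      apply div_nonneg _ (by positivity); linarith
    have hab : (c - X ω) / (2 * c) + (c + X ω) / (2 * c) = 1 := by
      field_simp; ring
    have hconv := convexOn_exp.2 (Set.mem_univ (t * (-c))) (Set.mem_univ (t * c)) ha hb' hab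
    have harg : ((c - X ω) / (2 * c)) • (t * (-c)) + ((c + X ω) / (2 * c)) • (t * c)
        = t * X ω := by
      field_simp
      rw [smul_eq_mul, smul_eq_mul, div_mul_eq_mul_div, div_mul_eq_mul_div, ← add_div,
        div_eq_iff (by positivity)]; ring
    rw [harg] at hconv
    refine hconv.trans_eq ?_
    rw [Real.cosh_eq, Real.sinh_eq]
    simp only [smul_eq_mul, mul_neg, Real.exp_neg]
    field_simp
    ring
  have hrint : Integrable (fun ω => cosh (t * c) + (sinh (t * c) / c) * X ω) P :=
    (integrable_const _).add (hXint.const_mul _)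
  have hlint : Integrable (fun ω => exp (t * X ω)) P :=
    (integrable_const (exp (|t| * c))).mono'
      ((hX.const_mul t).exp.aestronglyMeasurable)
      (Filter.Eventually.of_forall fun ω => by
        rw [Real.norm_eq_abs, abs_of_pos (exp_pos _), Real.exp_le_exp]
        calc t * X ω ≤ |t * X ω| := le_abs_self _
          _ = |t| * |X ω| := abs_mul _ _
          _ ≤ |t| * c := by
              exact mul_le_mul_of_nonneg_left (hb ω) (abs_nonneg t))
  calc mgf X P t = ∫ ω, exp (t * X ω) ∂P := rfl
    _ ≤ ∫ ω, (cosh (t * c) + (sinh (t * c) / c) * X ω) ∂P :=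
        integral_mono hlint hrint key
    _ = cosh (t * c) := by
        rw [integral_add (integrable_const _) (hXint.const_mul _), integral_const,
          integral_const_mul, hmean]
        simp
    _ ≤ exp ((t * c) ^ 2 / 2) := cosh_le_exp_half_sq _
    _ = exp (t ^ 2 * c ^ 2 / 2) := by rw [mul_pow]




open MeasureTheory ProbabilityTheory

/-- square-root-of-n rule for BBR. On a loss, each flow changes
its in-flight packets by an independent mean-zero random amount `X i` bounded
by `Δ⁺ BDP/(4n)`. If `B > (Δ⁺ BDP/√(2n)) √(ln(1/δ))`, then with probability at
least `1 - δ` the aggregate window `BDP + B + ∑ X i` stays at least `BDP`, so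
the link remains fully utilized. -/
theorem bbr_sqrt_n_rule
    {Ω : Type*} [MeasurableSpace Ω] (P : Measure Ω) [IsProbabilityMeasure P]
    (n : ℕ) (hn : 1 ≤ n) (BDP B Δp δ : ℝ) (hBDP : 0 < BDP) (hΔp : 1 ≤ Δp)
    (hδ0 : 0 < δ) (hδ1 : δ < 1)
    (X : Fin n → Ω → ℝ)
    (hmeas : ∀ i, Measurable (X i))
    (hind : iIndepFun X P)
    (hmean : ∀ i, ∫ ω, X i ω ∂P = 0)
    (hbound : ∀ i ω, |X i ω| ≤ Δp * BDP / (4 * n))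
    (hB : B > (Δp * BDP / Real.sqrt (2 * n)) * Real.sqrt (Real.log (1 / δ))) :
    P {ω | BDP + B + ∑ i, X i ω < BDP} ≤ ENNReal.ofReal δ := by
  have hn' : (1 : ℝ) ≤ (n : ℝ) := by exact_mod_cast hn
  have hn0 : (0 : ℝ) < n := lt_of_lt_of_le one_pos hn'
  set c : ℝ := Δp * BDP / (4 * n) with hc_def
  have hc : 0 < c := by positivity
  have hL : 0 < Real.log (1 / δ) := Real.log_pos (one_lt_one_div hδ0 hδ1)
  have hRpos : 0 < (Δp * BDP / Real.sqrt (2 * n)) * Real.sqrt (Real.log (1 / δ)) := by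
    apply mul_pos
    · apply div_pos (by positivity) (Real.sqrt_pos.2 (by positivity))
    · exact Real.sqrt_pos.2 hL
  have hBpos : 0 < B := hRpos.trans hB
  -- squared form of the hypothesis
  have hBsq : (Δp * BDP) ^ 2 * Real.log (1 / δ) / (2 * n) < B ^ 2 := by
    have h := mul_self_lt_mul_self hRpos.le hB
    have e1 : Real.sqrt (Real.log (1 / δ)) * Real.sqrt (Real.log (1 / δ))
        = Real.log (1 / δ) := Real.mul_self_sqrt hL.le
    have e2 : Real.sqrt (2 * n) * Real.sqrt (2 * n) = 2 * n :=
      Real.mul_self_sqrt (by positivity)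
    calc (Δp * BDP) ^ 2 * Real.log (1 / δ) / (2 * n)
        = ((Δp * BDP / Real.sqrt (2 * n)) * Real.sqrt (Real.log (1 / δ))) *
          ((Δp * BDP / Real.sqrt (2 * n)) * Real.sqrt (Real.log (1 / δ))) := by
          rw [mul_mul_mul_comm, div_mul_div_comm, e2, e1]
          ring
      _ < B * B := h
      _ = B ^ 2 := (sq B).symm
  set t : ℝ := B / (n * c ^ 2) with ht_def
  have ht : 0 < t := by positivity
  set S : Ω → ℝ := ∑ i, X i with hS_def
  have h_int : Integrable (fun ω => Real.exp (-t * S ω)) P := by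
    apply hind.integrable_exp_mul_sum hmeas
    intro i _
    refine (integrable_const (Real.exp (t * c))).mono'
      ((hmeas i).const_mul (-t)).exp.aestronglyMeasurable
      (Filter.Eventually.of_forall fun ω => ?_)
    rw [Real.norm_eq_abs, abs_of_pos (Real.exp_pos _), Real.exp_le_exp]
    calc -t * X i ω ≤ |(-t) * X i ω| := le_abs_self _
      _ = t * |X i ω| := by rw [abs_mul, abs_neg, abs_of_pos ht]
      _ ≤ t * c := mul_le_mul_of_nonneg_left (hbound i ω) ht.le
  -- Chernoff bound
  have hchern := measure_le_le_exp_mul_mgf (X := S) (μ := P) (-B)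
    (neg_nonpos.2 ht.le) h_int
  have hmgf : mgf S P (-t) ≤ Real.exp (n * (t ^ 2 * c ^ 2 / 2)) := by
    rw [hS_def, hind.mgf_sum hmeas]
    calc ∏ i : Fin n, mgf (X i) P (-t)
        ≤ ∏ _i : Fin n, Real.exp ((-t) ^ 2 * c ^ 2 / 2) := by
          apply Finset.prod_le_prod (fun i _ => mgf_nonneg)
          intro i _
          exact mgf_le_of_bound P (hmeas i) hc (hbound i) (hmean i) (-t)
      _ = Real.exp (n * (t ^ 2 * c ^ 2 / 2)) := by
          rw [Finset.prod_const, ← Real.exp_nat_mul]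
          simp [neg_pow]
  have hfinal : Real.exp (-(-t) * (-B)) * mgf S P (-t) ≤ δ := by
    calc Real.exp (-(-t) * (-B)) * mgf S P (-t)
        ≤ Real.exp (-(t * B)) * Real.exp (n * (t ^ 2 * c ^ 2 / 2)) := by
          apply mul_le_mul_of_nonneg_left hmgf (Real.exp_pos _).le |>.trans_eq' ?_
          ring_nf
      _ = Real.exp (-(t * B) + n * (t ^ 2 * c ^ 2 / 2)) := (Real.exp_add _ _).symm
      _ = Real.exp (- B ^ 2 / (2 * (n * c ^ 2))) := by
          congr 1
          rw [ht_def]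
          field_simp
          ring
      _ ≤ δ := by
          rw [← Real.exp_log hδ0, Real.exp_le_exp, div_le_iff₀ (by positivity)]
          have hlog : Real.log δ = -Real.log (1 / δ) := by
            rw [one_div, Real.log_inv, neg_neg]
          have h2nc : 2 * ((n : ℝ) * c ^ 2) = (Δp * BDP) ^ 2 / (8 * n) := by
            rw [hc_def]; field_simp; ring
          have hle : (Δp * BDP) ^ 2 * Real.log (1 / δ) / (8 * n) ≤
              (Δp * BDP) ^ 2 * Real.log (1 / δ) / (2 * n) := by
            apply div_le_div_of_nonneg_left (by positivity) (by positivity) (by nlinarith)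
          rw [h2nc, hlog]
          have hre : -Real.log (1 / δ) * ((Δp * BDP) ^ 2 / (8 * n))
              = -((Δp * BDP) ^ 2 * Real.log (1 / δ) / (8 * n)) := by ring
          rw [hre]
          linarith [hle, hBsq]
  calc P {ω | BDP + B + ∑ i, X i ω < BDP}
      ≤ P {ω | S ω ≤ -B} := by
        apply measure_mono
        intro ω hω
        simp only [Set.mem_setOf_eq] at hω ⊢
        rw [hS_def, Finset.sum_apply]
        linarith
    _ = ENNReal.ofReal ((P {ω | S ω ≤ -B}).toReal) :=
        (ENNReal.ofReal_toReal (measure_ne_top _ _)).symm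
    _ ≤ ENNReal.ofReal δ := ENNReal.ofReal_le_ofReal (hchern.trans hfinal)
end

section
/- In the generalized model where between times t₁ and t exactly n²/(Δ⁺·BDP) + s flows (for some s ≥ 0) halve their Δ-fair windows while the rest increase by one, the aggregate window satisfies W(t) ≥ BDP + B − s·Δ⁺·BDP/n. Consequently, a buffer of size B ≥ s·Δ⁺·BDP/n suffices for full link utilization. -/
/-- if exactly `n/w* + s` flows halve their Δ-fair windows
(`w* = Δ⁺ BDP/n`) while the rest add one packet, then
`W(t) ≥ BDP + B - s Δ⁺ BDP/n`; hence `B ≥ s Δ⁺ BDP/n` gives full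
utilization. -/
theorem desynchronized_flows_window_bound
    (n : ℕ) (hn : 1 ≤ n) (BDP B Δp s : ℝ) (hBDP : 0 < BDP) (hB : 0 ≤ B)
    (hΔp : 1 ≤ Δp) (hs : 0 ≤ s)
    (w : Fin n → ℝ) (D : Finset (Fin n))
    (hfair : ∀ i, w i ≤ Δp * BDP / n)
    (hlow : ∀ i, 2 ≤ w i)
    (hagg : ∑ i, w i ≥ BDP + B)
    (hD : (D.card : ℝ) ≤ (n : ℝ) / (Δp * BDP / n) + s) :
    (∑ i, (if i ∈ D then w i / 2 else w i + 1) ≥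
      BDP + B - s * (Δp * BDP / n)) ∧
    (B ≥ s * (Δp * BDP / n) →
      min ((∑ i, (if i ∈ D then w i / 2 else w i + 1)) / BDP) 1 = 1) := by
  have hn' : (0:ℝ) < n := by exact_mod_cast hn
  set wst := Δp * BDP / n with hw
  have hwpos : 0 < wst := by
    apply div_pos (mul_pos (by linarith) hBDP) hn'
  have hw2 : 2 ≤ wst := le_trans (hlow ⟨0, hn⟩) (hfair ⟨0, hn⟩)
  -- rewrite the sum
  have key : ∑ i, (if i ∈ D then w i / 2 else w i + 1)
      = (∑ i, (w i + 1)) - ∑ i ∈ D, (w i / 2 + 1) := by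
    have h1 : ∀ i, (if i ∈ D then w i / 2 else w i + 1)
        = (w i + 1) - (if i ∈ D then w i / 2 + 1 else 0) := by
      intro i; split_ifs <;> ring
    simp_rw [h1, Finset.sum_sub_distrib]
    congr 1
    rw [Finset.sum_ite_mem, Finset.univ_inter]
  have hbound : ∑ i ∈ D, (w i / 2 + 1) ≤ (D.card : ℝ) * wst := by
    calc ∑ i ∈ D, (w i / 2 + 1) ≤ ∑ i ∈ D, wst := by
          apply Finset.sum_le_sum
          intro i _
          have := hfair i
          linarith
      _ = (D.card : ℝ) * wst := by rw [Finset.sum_const, nsmul_eq_mul]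
  have hcard : (D.card : ℝ) * wst ≤ (n : ℝ) + s * wst := by
    have h1 : (D.card : ℝ) * wst ≤ ((n : ℝ) / wst + s) * wst :=
      mul_le_mul_of_nonneg_right hD hwpos.le
    have h2 : ((n : ℝ) / wst + s) * wst = (n : ℝ) + s * wst := by
      field_simp
    linarith
  have hsum1 : ∑ i, (w i + 1) = (∑ i, w i) + n := by
    rw [Finset.sum_add_distrib, Finset.sum_const, Finset.card_univ,
      Fintype.card_fin, nsmul_eq_mul, mul_one]
  have main : ∑ i, (if i ∈ D then w i / 2 else w i + 1)
      ≥ BDP + B - s * wst := by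
    rw [key, hsum1]
    linarith
  refine ⟨main, fun hB2 => ?_⟩
  have h1 : (1:ℝ) ≤ (∑ i, (if i ∈ D then w i / 2 else w i + 1)) / BDP := by
    rw [le_div_iff₀ hBDP, one_mul]
    linarith
  exact min_eq_right h1
end
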